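/- With the habitat hypergraph B and bijection f as above (every habitat inducing a cycle): if F ⊆ E(G) is such that G[F][H] is connected for every habitat H, then M = E(B) \ f(F) is a matching in B (its hyperedges are pairwise disjoint). -/

import Mathlib

open SimpleGraph
open scoped Classical

def edgesIn {V : Type*} (G : SimpleGraph V) (H : Set V) : Set (Sym2 V) :=
  {e | e ∈ G.edgeSet ∧ ∀ v ∈ e, v ∈ H}

def IsCycleGraph {W : Type*} (G : SimpleGraph W) : Prop :=
  G.Connected ∧ ∀ v, (G.neighborSet v).ncard = 2

/-- The hyperedge of the habitat hypergraph associated with an edge `e` of `G`. -/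
def hyperOf {V : Type*} (G : SimpleGraph V) {r : ℕ} (Hs : Fin r → Set V)
    (e : Sym2 V) : Set (Fin r) :=
  {i | e ∈ edgesIn G (Hs i)}

/-- A connected graph on `n` vertices has at least `n - 1` edges. -/
lemma conn_card_le {W : Type*} [Fintype W] (G : SimpleGraph W) (h : G.Connected) :
    Fintype.card W ≤ G.edgeFinset.card + 1 := by
  obtain ⟨v0⟩ := h.nonempty
  have P : ∀ v, v ≠ v0 → ∃ w, G.Adj v w ∧ G.dist w v0 < G.dist v v0 := by
    intro v hv
    obtain ⟨p, hp⟩ := h.exists_walk_length_eq_dist v v0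
    cases p with
    | nil => exact absurd rfl hv
    | cons h' q =>
      refine ⟨_, h', ?_⟩
      have := G.dist_le q
      simp [Walk.length_cons] at hp
      omega
  set nxt : W → W := fun v => if hv : v = v0 then v else Classical.choose (P v hv) with hnxt
  have key : (Finset.univ.erase v0).card ≤ G.edgeFinset.card := by
    apply Finset.card_le_card_of_injOn (fun v => s(v, nxt v))
    · intro v hv
      have hv' : v ≠ v0 := Finset.ne_of_mem_erase hv
      have := (Classical.choose_spec (P v hv')).1
      simp only [hnxt, dif_neg hv']
      rw [Finset.mem_coe, mem_edgeFinset, mem_edgeSet]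
      exact this
    · intro v hv v' hv' heq
      have h1 : v ≠ v0 := Finset.ne_of_mem_erase hv
      have h2 : v' ≠ v0 := Finset.ne_of_mem_erase hv'
      have d1 := (Classical.choose_spec (P v h1)).2
      have d2 := (Classical.choose_spec (P v' h2)).2
      simp only [hnxt, dif_neg h1, dif_neg h2, Sym2.eq_iff] at heq
      rcases heq with ⟨rfl, -⟩ | ⟨h3, h4⟩
      · rfl
      · exfalso; rw [← h3] at d2; rw [h4] at d1; omega
  have : (Finset.univ.erase v0).card = Fintype.card W - 1 := by
    rw [Finset.card_erase_of_mem (Finset.mem_univ _), Finset.card_univ]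
  omega

/-- A 2-regular graph on `n` vertices has exactly `n` edges. -/
lemma cycle_card_edges {W : Type*} [Fintype W] (G : SimpleGraph W)
    (h : ∀ v, (G.neighborSet v).ncard = 2) : G.edgeFinset.card = Fintype.card W := by
  have hs := G.sum_degrees_eq_twice_card_edges
  have hdeg : ∀ v, G.degree v = 2 := by
    intro v
    rw [← h v, ← card_neighborSet_eq_degree, Set.ncard_eq_toFinset_card',
      Set.toFinset_card]
  rw [Finset.sum_congr rfl (fun v _ => hdeg v), Finset.sum_const, Finset.card_univ,
    smul_eq_mul] at hs
  omega

/-- Lift an edge of `G` contained in `H` to an edge of the induced graph on `H`. -/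
lemma lift_edge {V : Type*} (G : SimpleGraph V) (H : Set V) (e : Sym2 V)
    (he : e ∈ edgesIn G H) :
    ∃ eb : Sym2 ↥H, eb ∈ (G.induce H).edgeSet ∧ Sym2.map Subtype.val eb = e := by
  obtain ⟨⟨a, b⟩, rfl⟩ := e.exists_rep
  obtain ⟨hadj, hmem⟩ := he
  have ha : a ∈ H := hmem a (Sym2.mem_mk_left a b)
  have hb : b ∈ H := hmem b (Sym2.mem_mk_right a b)
  refine ⟨s(⟨a, ha⟩, ⟨b, hb⟩), ?_, rfl⟩
  rw [mem_edgeSet]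
  exact hadj

/-- If every habitat induces a cycle and `G[F][Hᵢ]` is connected for every habitat,
then `E(G) \ F` is a matching in the habitat hypergraph: the corresponding hyperedges
are pairwise disjoint. -/
theorem stmt7 {V : Type*} [Fintype V] (G : SimpleGraph V) (r : ℕ) (Hs : Fin r → Set V)
    (hcyc : ∀ i, IsCycleGraph (G.induce (Hs i)))
    (F : Set (Sym2 V)) (hF : F ⊆ G.edgeSet)
    (hconn : ∀ i, ((SimpleGraph.fromEdgeSet F).induce (Hs i)).Connected) :
    ∀ e ∈ G.edgeSet \ F, ∀ e' ∈ G.edgeSet \ F, e ≠ e' →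
      Disjoint (hyperOf G Hs e) (hyperOf G Hs e') := by
  intro e he e' he' hne
  rw [Set.disjoint_left]
  intro i hi hi'
  obtain ⟨eb, hebC, hebmap⟩ := lift_edge G (Hs i) e hi
  obtain ⟨eb', heb'C, heb'map⟩ := lift_edge G (Hs i) e' hi'
  set C := G.induce (Hs i) with hC
  set K := (SimpleGraph.fromEdgeSet F).induce (Hs i) with hK
  have hKC : K.edgeFinset ⊆ C.edgeFinset := by
    intro x hx
    rw [mem_edgeFinset] at hx ⊢
    induction x using Sym2.ind with
    | _ u v =>
      rw [mem_edgeSet] at hx ⊢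
      simp only [hK, comap_adj, fromEdgeSet_adj] at hx
      exact hF hx.1
  have hKinF : ∀ x ∈ K.edgeFinset, Sym2.map Subtype.val x ∈ F := by
    intro x hx
    induction x using Sym2.ind with
    | _ u v =>
      rw [mem_edgeFinset, mem_edgeSet] at hx
      simp only [hK, comap_adj, fromEdgeSet_adj] at hx
      simpa using hx.1
  have hebK : eb ∉ K.edgeFinset := fun h => he.2 (hebmap ▸ hKinF eb h)
  have heb'K : eb' ∉ K.edgeFinset := fun h => he'.2 (heb'map ▸ hKinF eb' h)
  have hebne : eb ≠ eb' := by
    intro h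
    exact hne (by rw [← hebmap, ← heb'map, h])
  have hsub : insert eb (insert eb' K.edgeFinset) ⊆ C.edgeFinset := by
    intro x hx
    rcases Finset.mem_insert.mp hx with rfl | hx
    · exact mem_edgeFinset.mpr hebC
    · rcases Finset.mem_insert.mp hx with rfl | hx
      · exact mem_edgeFinset.mpr heb'C
      · exact hKC hx
  have hcard : K.edgeFinset.card + 2 ≤ C.edgeFinset.card := by
    have := Finset.card_le_card hsub
    rwa [Finset.card_insert_of_notMem (by simp [hebne, hebK]),
      Finset.card_insert_of_notMem heb'K] at this
  have h2 := conn_card_le K (hconn i)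
  have h3 := cycle_card_edges C (hcyc i).2
  simp only [edgeFinset_card, Fintype.card_eq_nat_card] at h2 h3 hcard
  omega
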